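/- For every t ∈ ℂ with t ≠ 0, the function x is complex differentiable at t with x'(t) = y(t)^{f-1}/((f+1) t³), and (t(t-1)(f t+1)/(f+1))·x'(t) = x(t) (so the vector field x d/dx corresponds to (t(t-1)(f t+1)/(f+1)) d/dt in the coordinate t). Moreover, if in addition t ≠ -1/f, then x'(t) ≠ 0; hence the x-projection of the mirror curve has no ramification point at any finite t in the curve's domain (its unique ramification point is at t = ∞). -/

import Mathlib

/-- For `t ≠ 0`, with `y(t) = (1/(f+1))(1/t + f)` and `x(t) = y(t)^f (1 - y(t))`, the
function `x` is complex differentiable at `t` with `x'(t) = y(t)^(f-1)/((f+1) t³)`, and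
`(t(t-1)(ft+1)/(f+1))·x'(t) = x(t)` (so `x d/dx` corresponds to
`(t(t-1)(ft+1)/(f+1)) d/dt`). Moreover, if also `t ≠ -1/f`, then `x'(t) ≠ 0`: the
`x`-projection of the mirror curve has no finite ramification point. -/
theorem mirror_curve_x_derivative (f : ℕ) (hf : 1 ≤ f) (t : ℂ) (ht : t ≠ 0)
    (y x : ℂ → ℂ)
    (hy : ∀ s : ℂ, s ≠ 0 → y s = (1 / ((f : ℂ) + 1)) * (1 / s + (f : ℂ)))
    (hx : ∀ s : ℂ, s ≠ 0 → x s = y s ^ f * (1 - y s)) :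
    HasDerivAt x (y t ^ (f - 1) / (((f : ℂ) + 1) * t ^ 3)) t ∧
    (t * (t - 1) * ((f : ℂ) * t + 1) / ((f : ℂ) + 1)) *
      (y t ^ (f - 1) / (((f : ℂ) + 1) * t ^ 3)) = x t ∧
    (t ≠ -1 / (f : ℂ) → y t ^ (f - 1) / (((f : ℂ) + 1) * t ^ 3) ≠ 0) := by
  obtain ⟨k, rfl⟩ : ∃ k, f = k + 1 := ⟨f - 1, (Nat.succ_pred_eq_of_pos hf).symm⟩
  have hk1 : ((k : ℂ) + 1) ≠ 0 := by
    have := Nat.cast_add_one_ne_zero (R := ℂ) k; push_cast at this; exact this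
  have hk2 : ((k : ℂ) + 1 + 1) ≠ 0 := by
    have := Nat.cast_add_one_ne_zero (R := ℂ) (k + 1); push_cast at this; exact this
  set Y : ℂ := (1 / (((k : ℂ) + 1) + 1)) * (1 / t + ((k : ℂ) + 1)) with hYdef
  set u' : ℂ := (1 / (((k : ℂ) + 1) + 1)) * (-(t ^ 2)⁻¹) with hu'def
  have hyt : y t = Y := by rw [hy t ht, hYdef]; push_cast; ring
  have hu : HasDerivAt (fun s : ℂ => (1 / (((k : ℂ) + 1) + 1)) * (1 / s + ((k : ℂ) + 1))) u' t := by
    have h0 : HasDerivAt (fun s : ℂ => 1 / s + ((k : ℂ) + 1)) (-(t ^ 2)⁻¹) t := by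
      simpa [one_div] using (hasDerivAt_inv ht).add_const ((k : ℂ) + 1)
    exact h0.const_mul _
  have hg := (hu.pow (k + 1)).mul ((hasDerivAt_const t (1 : ℂ)).sub hu)
  -- simplify the derivative value
  have hstep : ((k : ℂ) + 1) * u' * (1 - Y) - Y * u' = 1 / ((((k : ℂ) + 1) + 1) * t ^ 3) := by
    calc ((k : ℂ) + 1) * u' * (1 - Y) - Y * u'
        = u' * (((k : ℂ) + 1) - (((k : ℂ) + 1) + 1) * Y) := by ring
      _ = u' * (-(1 / t)) := by
          rw [hYdef]
          congr 1
          field_simp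
          ring
      _ = 1 / ((((k : ℂ) + 1) + 1) * t ^ 3) := by
          rw [hu'def]
          field_simp
  have hval : (↑(k + 1) * Y ^ (k + 1 - 1) * u') * (1 - Y) + Y ^ (k + 1) * (0 - u')
      = Y ^ k / ((((k : ℂ) + 1) + 1) * t ^ 3) := by
    have h1 : (↑(k + 1) * Y ^ (k + 1 - 1) * u') * (1 - Y) + Y ^ (k + 1) * (0 - u')
        = Y ^ k * (((k : ℂ) + 1) * u' * (1 - Y) - Y * u') := by
      simp only [Nat.add_sub_cancel, pow_succ]
      push_cast
      ring
    rw [h1, hstep, mul_one_div]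
  simp only [Pi.sub_apply, Pi.pow_apply] at hg
  rw [← hYdef, hval] at hg
  -- transfer to x via eventual equality
  have heq : x =ᶠ[nhds t]
      (fun s : ℂ => ((1 / (((k : ℂ) + 1) + 1)) * (1 / s + ((k : ℂ) + 1))) ^ (k + 1) *
        (1 - (1 / (((k : ℂ) + 1) + 1)) * (1 / s + ((k : ℂ) + 1)))) := by
    filter_upwards [eventually_ne_nhds ht] with s hs
    rw [hx s hs, hy s hs]
    push_cast
    ring_nf
  have hD : HasDerivAt x (Y ^ k / ((((k : ℂ) + 1) + 1) * t ^ 3)) t := hg.congr_of_eventuallyEq heq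
  have hcast : ((↑(k + 1) : ℂ) + 1) = ((k : ℂ) + 1) + 1 := by push_cast; ring
  refine ⟨?_, ?_, ?_⟩
  · rw [hyt, Nat.add_sub_cancel, hcast]; exact hD
  · -- the algebraic identity
    rw [hx t ht, hyt]
    have h2 : t * (t - 1) * (((k : ℂ) + 1) * t + 1) / (((k : ℂ) + 1) + 1) *
        (1 / ((((k : ℂ) + 1) + 1) * t ^ 3)) = Y * (1 - Y) := by
      rw [hYdef]
      field_simp
      ring
    calc t * (t - 1) * ((↑(k + 1) : ℂ) * t + 1) / ((↑(k + 1) : ℂ) + 1) *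
          (Y ^ (k + 1 - 1) / (((↑(k + 1) : ℂ) + 1) * t ^ 3))
        = Y ^ k * (t * (t - 1) * (((k : ℂ) + 1) * t + 1) / (((k : ℂ) + 1) + 1) *
            (1 / ((((k : ℂ) + 1) + 1) * t ^ 3))) := by
          rw [Nat.add_sub_cancel]; push_cast; ring
      _ = Y ^ k * (Y * (1 - Y)) := by rw [h2]
      _ = Y ^ (k + 1) * (1 - Y) := by ring
  · intro hne
    have ht3 : ((((k : ℂ) + 1) + 1) * t ^ 3) ≠ 0 := mul_ne_zero hk2 (pow_ne_zero 3 ht)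
    have hY0 : Y ≠ 0 := by
      rw [hYdef]
      intro h
      apply hne
      rw [mul_eq_zero] at h
      rcases h with h | h
      · exact absurd h (one_div_ne_zero hk2)
      · have h2 : 1 + ((k : ℂ) + 1) * t = 0 := by
          have := congrArg (· * t) h
          simpa [one_div, add_mul, inv_mul_cancel₀ ht] using this
        push_cast
        rw [eq_div_iff hk1]
        linear_combination h2
    rw [hyt, Nat.add_sub_cancel, hcast]
    exact div_ne_zero (pow_ne_zero k hY0) ht3
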